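/- Let G = (V,E) be a simple graph on a finite vertex set V with |V| = n, and let c be a constant such that for every vertex v ∈ V, the number of vertices at graph distance at most 2 from v in G is at most c. Fix 0 ≤ p < 1 and form a random supergraph G' of G by adding, independently for each unordered pair of distinct vertices, an edge with probability p (pairs already joined in G remain joined). Let N be the number of unordered pairs {i,j} of distinct vertices such that i and j are NOT adjacent in G, but i and j ARE adjacent in G' and moreover have a common neighbor in G' (i.e., there exists z with i ~ z and z ~ j in G'). Then the expectation of N satisfies E[N] ≤ c n p + c n² p² + (1/2) n³ p³. -/

import Mathlib

set_option linter.unusedSectionVars false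
open Finset

section Aux
variable {V : Type*} [Fintype V] [DecidableEq V]

def addedP (ω : {e : Sym2 V // ¬ e.IsDiag} → Bool) (s : Sym2 V) : Prop :=
  ∃ h : ¬ s.IsDiag, ω ⟨s, h⟩ = true

open Classical in
noncomputable def IndA (ω : {e : Sym2 V // ¬ e.IsDiag} → Bool) (s : Sym2 V) : ℝ :=
  if addedP ω s then 1 else 0

open Classical in
noncomputable def D2 (G : SimpleGraph V) : Finset (Sym2 V) :=
  univ.filter (fun q => ¬ q.IsDiag ∧ ∃ i j : V, q = s(i, j) ∧ ¬ G.Adj i j ∧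
    ∃ z : V, G.Adj i z ∧ G.Adj z j)

open Classical in
noncomputable def TBf (G : SimpleGraph V) : Finset (V × V × V) :=
  univ.filter (fun t => t.1 ≠ t.2.1 ∧ t.1 ≠ t.2.2 ∧ t.2.1 ≠ t.2.2 ∧
    ¬ G.Adj t.1 t.2.1 ∧ G.Adj t.2.2 t.2.1)

open Classical in
noncomputable def TCf (V : Type*) [Fintype V] [DecidableEq V] : Finset (V × V × V) :=
  univ.filter (fun t => t.1 ≠ t.2.1 ∧ t.1 ≠ t.2.2 ∧ t.2.1 ≠ t.2.2)

omit [Fintype V] [DecidableEq V] in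
lemma addedP_iff (ω : {e : Sym2 V // ¬ e.IsDiag} → Bool) (s : Sym2 V) (h : ¬ s.IsDiag) :
    addedP ω s ↔ ω ⟨s, h⟩ = true :=
  ⟨fun ⟨_, hh⟩ => hh, fun hh => ⟨h, hh⟩⟩

lemma ind_mul (P Q : Prop) [Decidable P] [Decidable Q] :
    (if P then (1:ℝ) else 0) * (if Q then 1 else 0) = if P ∧ Q then 1 else 0 := by
  by_cases hP : P <;> by_cases hQ : Q <;> simp [hP, hQ]

lemma sum_weight_indicator (p : ℝ) (T : Finset {e : Sym2 V // ¬ e.IsDiag}) :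
    ∑ ω : {e : Sym2 V // ¬ e.IsDiag} → Bool,
      (∏ e, if ω e then p else 1 - p) *
        (if ∀ e ∈ T, ω e = true then (1:ℝ) else 0) = p ^ T.card := by
  classical
  have h1 : ∀ ω : {e : Sym2 V // ¬ e.IsDiag} → Bool,
      (∏ e, if ω e then p else 1 - p) * (if ∀ e ∈ T, ω e = true then (1:ℝ) else 0)
      = ∏ e, (if e ∈ T then (if ω e then p else 0) else (if ω e then p else 1 - p)) := by
    intro ω
    by_cases h : ∀ e ∈ T, ω e = true
    · rw [if_pos h, mul_one]
      refine Finset.prod_congr rfl fun e _ => ?_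
      by_cases he : e ∈ T
      · simp [he, h e he]
      · simp [he]
    · rw [if_neg h, mul_zero]
      push_neg at h
      obtain ⟨e₀, he₀, hω⟩ := h
      refine (Finset.prod_eq_zero (Finset.mem_univ e₀) ?_).symm
      simp [he₀, hω]
  simp_rw [h1]
  rw [← Fintype.prod_sum (fun (e : {e : Sym2 V // ¬ e.IsDiag}) (b : Bool) =>
    if e ∈ T then (if b = true then p else 0) else (if b = true then p else 1 - p))]
  have : ∀ e : {e : Sym2 V // ¬ e.IsDiag},
      (∑ b : Bool, if e ∈ T then (if b = true then p else 0) else (if b = true then p else 1 - p))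
      = if e ∈ T then p else 1 := by
    intro e; by_cases he : e ∈ T <;> simp [he]
  simp_rw [this]
  rw [Finset.prod_ite_mem, Finset.univ_inter, Finset.prod_const]

lemma count_pairs (G : SimpleGraph V) (n : ℕ)
    (hn : Fintype.card V = n) (c : ℝ)
    (hc : ∀ v : V, (Nat.card {u : V | ∃ w : G.Walk v u, w.length ≤ 2} : ℝ) ≤ c)
    (Q : V × V → Prop) [DecidablePred Q]
    (hQ : ∀ a b, Q (a, b) → ∃ w : G.Walk a b, w.length ≤ 2) :
    ((univ.filter Q).card : ℝ) ≤ c * n := by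
  classical
  rw [Finset.card_eq_sum_card_fiberwise (f := Prod.fst) (t := univ) (fun x _ => mem_univ _)]
  push_cast
  have hfib : ∀ i : V, (((univ.filter Q).filter (fun w => w.1 = i)).card : ℝ) ≤ c := by
    intro i
    have h1 : ((univ.filter Q).filter (fun w => w.1 = i)).card ≤
        (univ.filter (fun b : V => ∃ w : G.Walk i b, w.length ≤ 2)).card := by
      apply Finset.card_le_card_of_injOn (fun w => w.2)
      · intro w hw
        simp only [mem_coe, mem_filter, mem_univ, true_and] at hw ⊢
        obtain ⟨hQw, hfst⟩ := hw
        exact hQ i w.2 (by rwa [← hfst, Prod.mk.eta])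
      · intro w hw w' hw' hsnd
        simp only [coe_filter, Set.mem_setOf_eq, mem_univ, true_and] at hw hw'
        exact Prod.ext (hw.2.trans hw'.2.symm) hsnd
    calc (((univ.filter Q).filter (fun w => w.1 = i)).card : ℝ)
        ≤ ((univ.filter (fun b : V => ∃ w : G.Walk i b, w.length ≤ 2)).card : ℝ) := by
          exact_mod_cast h1
      _ = (Nat.card {u : V | ∃ w : G.Walk i u, w.length ≤ 2} : ℝ) := by
          rw [Nat.card_eq_fintype_card, Fintype.card_subtype]
          simp only [Set.mem_setOf_eq]
      _ ≤ c := hc i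
  calc (∑ i : V, (((univ.filter Q).filter (fun w => w.1 = i)).card : ℝ))
      ≤ ∑ _i : V, c := Finset.sum_le_sum (fun i _ => hfib i)
    _ = c * n := by rw [Finset.sum_const, card_univ, hn, nsmul_eq_mul, mul_comm]

lemma two_mul_card_image_le {α β : Type*} [DecidableEq α] [DecidableEq β]
    (S : Finset α) (π : α → β) (σ : α → α)
    (hσS : ∀ t ∈ S, σ t ∈ S) (hne : ∀ t ∈ S, σ t ≠ t)
    (hcomm : ∀ t, π (σ t) = π t) :
    2 * (S.image π).card ≤ S.card := by
  rw [Finset.card_eq_sum_card_fiberwise (f := π) (t := S.image π)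
    (fun x hx => mem_image_of_mem π hx)]
  calc 2 * (S.image π).card = ∑ _q ∈ S.image π, 2 := by
        rw [Finset.sum_const, smul_eq_mul, mul_comm]
    _ ≤ ∑ q ∈ S.image π, (S.filter (fun t => π t = q)).card := by
        refine Finset.sum_le_sum fun q hq => ?_
        obtain ⟨t, htS, htq⟩ := Finset.mem_image.mp hq
        refine Finset.one_lt_card.mpr ?_
        refine ⟨σ t, ?_, t, ?_, hne t htS⟩
        · exact Finset.mem_filter.mpr ⟨hσS t htS, (hcomm t).trans htq⟩
        · exact Finset.mem_filter.mpr ⟨htS, htq⟩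

-- counting bounds
lemma cardD2_le (G : SimpleGraph V) (n : ℕ) (hn : Fintype.card V = n) (c : ℝ)
    (hc : ∀ v : V, (Nat.card {u : V | ∃ w : G.Walk v u, w.length ≤ 2} : ℝ) ≤ c) :
    ((D2 G).card : ℝ) ≤ c * n := by
  classical
  have hsub : D2 G ⊆ (univ.filter (fun w : V × V => ¬ G.Adj w.1 w.2 ∧
      ∃ z : V, G.Adj w.1 z ∧ G.Adj z w.2)).image (fun w => s(w.1, w.2)) := by
    intro q hq
    simp only [D2, mem_filter, mem_univ, true_and] at hq
    obtain ⟨hd, i, j, hq1, hnadj, z, hiz, hzj⟩ := hq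
    exact Finset.mem_image.mpr ⟨(i, j), Finset.mem_filter.mpr
      ⟨mem_univ _, hnadj, z, hiz, hzj⟩, hq1.symm⟩
  calc ((D2 G).card : ℝ)
      ≤ ((univ.filter (fun w : V × V => ¬ G.Adj w.1 w.2 ∧
          ∃ z : V, G.Adj w.1 z ∧ G.Adj z w.2)).card : ℝ) := by
        exact_mod_cast (Finset.card_le_card hsub).trans (Finset.card_image_le)
    _ ≤ c * n := by
        apply count_pairs G n hn c hc
        rintro a b ⟨-, z, haz, hzb⟩
        exact ⟨SimpleGraph.Walk.cons haz (SimpleGraph.Walk.cons hzb SimpleGraph.Walk.nil),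
          by simp⟩

lemma cardTB_le (G : SimpleGraph V) (n : ℕ) (hn : Fintype.card V = n) (c : ℝ)
    (hc : ∀ v : V, (Nat.card {u : V | ∃ w : G.Walk v u, w.length ≤ 2} : ℝ) ≤ c) :
    ((TBf G).card : ℝ) ≤ c * n ^ 2 := by
  classical
  have hsub : TBf G ⊆ (univ : Finset V) ×ˢ (univ.filter (fun w : V × V => G.Adj w.2 w.1)) := by
    intro t ht
    simp only [TBf, mem_filter, mem_univ, true_and] at ht
    exact Finset.mem_product.mpr ⟨mem_univ _, Finset.mem_filter.mpr ⟨mem_univ _, ht.2.2.2.2⟩⟩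
  have h2 : ((univ.filter (fun w : V × V => G.Adj w.2 w.1)).card : ℝ) ≤ c * n := by
    apply count_pairs G n hn c hc
    intro a b hab
    exact ⟨SimpleGraph.Walk.cons hab.symm SimpleGraph.Walk.nil, by simp⟩
  calc ((TBf G).card : ℝ)
      ≤ (((univ : Finset V) ×ˢ (univ.filter (fun w : V × V => G.Adj w.2 w.1))).card : ℝ) := by
        exact_mod_cast Finset.card_le_card hsub
    _ = (n : ℝ) * ((univ.filter (fun w : V × V => G.Adj w.2 w.1)).card : ℝ) := by
        rw [Finset.card_product, card_univ, hn]; push_cast; ring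
    _ ≤ (n : ℝ) * (c * n) := by
        apply mul_le_mul_of_nonneg_left h2 (by positivity)
    _ = c * n ^ 2 := by ring

lemma cardTC_le (n : ℕ) (hn : Fintype.card V = n) :
    ((TCf V).card : ℝ) ≤ (n : ℝ) ^ 3 := by
  classical
  have : (TCf V).card ≤ Fintype.card (V × V × V) := Finset.card_le_univ _
  have h2 : Fintype.card (V × V × V) = n ^ 3 := by
    simp [Fintype.card_prod, hn]; ring
  calc ((TCf V).card : ℝ) ≤ (Fintype.card (V × V × V) : ℝ) := by exact_mod_cast this
    _ = (n : ℝ) ^ 3 := by rw [h2]; push_cast; ring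



section Exp
variable {V : Type*} [Fintype V] [DecidableEq V]

lemma not_isDiag_mk {i j : V} (h : i ≠ j) : ¬ (s(i, j) : Sym2 V).IsDiag := by
  simp [Sym2.mk_isDiag_iff, h]

lemma exp_one (G : SimpleGraph V) (p : ℝ) {q : Sym2 V} (hq : q ∈ D2 G) :
    ∑ ω : {e : Sym2 V // ¬ e.IsDiag} → Bool,
      (∏ e, if ω e then p else 1 - p) * IndA ω q = p := by
  classical
  have hd : ¬ q.IsDiag := by
    simp only [D2, mem_filter, mem_univ, true_and] at hq
    exact hq.1
  have h1 : ∀ ω : {e : Sym2 V // ¬ e.IsDiag} → Bool, IndA ω q =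
      if ∀ e ∈ ({⟨q, hd⟩} : Finset {e : Sym2 V // ¬ e.IsDiag}), ω e = true
      then (1:ℝ) else 0 := by
    intro ω
    unfold IndA
    refine if_congr ?_ rfl rfl
    rw [addedP_iff ω q hd]
    simp
  simp_rw [h1]
  rw [sum_weight_indicator, Finset.card_singleton, pow_one]

lemma exp_two (G : SimpleGraph V) (p : ℝ) {t : V × V × V} (ht : t ∈ TBf G) :
    ∑ ω : {e : Sym2 V // ¬ e.IsDiag} → Bool,
      (∏ e, if ω e then p else 1 - p) *
        (IndA ω s(t.1, t.2.1) * IndA ω s(t.1, t.2.2)) = p ^ 2 := by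
  classical
  obtain ⟨i, j, z⟩ := t
  simp only [TBf, mem_filter, mem_univ, true_and] at ht
  obtain ⟨hij, hiz, hjz, -, -⟩ := ht
  have h1 : ¬ (s(i, j) : Sym2 V).IsDiag := not_isDiag_mk hij
  have h2 : ¬ (s(i, z) : Sym2 V).IsDiag := not_isDiag_mk hiz
  set e₁ : {e : Sym2 V // ¬ e.IsDiag} := ⟨s(i, j), h1⟩
  set e₂ : {e : Sym2 V // ¬ e.IsDiag} := ⟨s(i, z), h2⟩
  have hne : e₁ ≠ e₂ := by
    simp only [e₁, e₂, ne_eq, Subtype.mk.injEq, Sym2.congr_right]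
    exact hjz
  have hpt : ∀ ω : {e : Sym2 V // ¬ e.IsDiag} → Bool,
      IndA ω s(i, j) * IndA ω s(i, z) =
      if ∀ e ∈ ({e₁, e₂} : Finset {e : Sym2 V // ¬ e.IsDiag}), ω e = true
      then (1:ℝ) else 0 := by
    intro ω
    unfold IndA
    rw [ind_mul]
    refine if_congr ?_ rfl rfl
    rw [addedP_iff ω _ h1, addedP_iff ω _ h2]
    simp [e₁, e₂]
  simp_rw [hpt]
  rw [sum_weight_indicator, Finset.card_pair hne]

lemma exp_three (p : ℝ) {t : V × V × V} (ht : t ∈ TCf V) :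
    ∑ ω : {e : Sym2 V // ¬ e.IsDiag} → Bool,
      (∏ e, if ω e then p else 1 - p) *
        (IndA ω s(t.1, t.2.1) * IndA ω s(t.1, t.2.2) * IndA ω s(t.2.2, t.2.1)) = p ^ 3 := by
  classical
  obtain ⟨i, j, z⟩ := t
  simp only [TCf, mem_filter, mem_univ, true_and] at ht
  obtain ⟨hij, hiz, hjz⟩ := ht
  have h1 : ¬ (s(i, j) : Sym2 V).IsDiag := not_isDiag_mk hij
  have h2 : ¬ (s(i, z) : Sym2 V).IsDiag := not_isDiag_mk hiz
  have h3 : ¬ (s(z, j) : Sym2 V).IsDiag := not_isDiag_mk (fun h => hjz h.symm)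
  set e₁ : {e : Sym2 V // ¬ e.IsDiag} := ⟨s(i, j), h1⟩
  set e₂ : {e : Sym2 V // ¬ e.IsDiag} := ⟨s(i, z), h2⟩
  set e₃ : {e : Sym2 V // ¬ e.IsDiag} := ⟨s(z, j), h3⟩
  have h12 : e₁ ≠ e₂ := by
    simp only [e₁, e₂, ne_eq, Subtype.mk.injEq, Sym2.congr_right]; exact hjz
  have h13 : e₁ ≠ e₃ := by
    simp only [e₁, e₃, ne_eq, Subtype.mk.injEq, Sym2.congr_left]; exact hiz
  have h23 : e₂ ≠ e₃ := by
    simp only [e₂, e₃, ne_eq, Subtype.mk.injEq]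
    intro h
    rcases Sym2.eq_iff.mp h with ⟨h', -⟩ | ⟨h', -⟩
    · exact hiz h'
    · exact hij h'
  have hpt : ∀ ω : {e : Sym2 V // ¬ e.IsDiag} → Bool,
      IndA ω s(i, j) * IndA ω s(i, z) * IndA ω s(z, j) =
      if ∀ e ∈ ({e₁, e₂, e₃} : Finset {e : Sym2 V // ¬ e.IsDiag}), ω e = true
      then (1:ℝ) else 0 := by
    intro ω
    unfold IndA
    rw [ind_mul, ind_mul]
    refine if_congr ?_ rfl rfl
    rw [addedP_iff ω _ h1, addedP_iff ω _ h2, addedP_iff ω _ h3]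
    simp only [Finset.mem_insert, Finset.mem_singleton, forall_eq_or_imp, forall_eq]
    tauto
  simp_rw [hpt]
  rw [sum_weight_indicator]
  have hcard : ({e₁, e₂, e₃} : Finset {e : Sym2 V // ¬ e.IsDiag}).card = 3 := by
    rw [Finset.card_insert_of_notMem (by simp [h12, h13]), Finset.card_pair h23]
  rw [hcard]

end Exp

section Key
variable {V : Type*} [Fintype V] [DecidableEq V]

lemma key_bound (G : SimpleGraph V) (ω : {e : Sym2 V // ¬ e.IsDiag} → Bool) :
    (Nat.card {q : Sym2 V // ∃ i j : V, q = s(i, j) ∧ i ≠ j ∧ ¬ G.Adj i j ∧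
        (G ⊔ SimpleGraph.fromEdgeSet
            {e : Sym2 V | ∃ h : ¬ e.IsDiag, ω ⟨e, h⟩ = true}).Adj i j ∧
        ∃ z : V,
          (G ⊔ SimpleGraph.fromEdgeSet
              {e : Sym2 V | ∃ h : ¬ e.IsDiag, ω ⟨e, h⟩ = true}).Adj i z ∧
          (G ⊔ SimpleGraph.fromEdgeSet
              {e : Sym2 V | ∃ h : ¬ e.IsDiag, ω ⟨e, h⟩ = true}).Adj z j} : ℝ)
    ≤ (∑ q ∈ D2 G, IndA ω q)
      + (∑ t ∈ TBf G, IndA ω s(t.1, t.2.1) * IndA ω s(t.1, t.2.2))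
      + (1 / 2) * ∑ t ∈ TCf V,
          IndA ω s(t.1, t.2.1) * IndA ω s(t.1, t.2.2) * IndA ω s(t.2.2, t.2.1) := by
  classical
  have hAdj : ∀ i j : V,
      (G ⊔ SimpleGraph.fromEdgeSet
        {e : Sym2 V | ∃ h : ¬ e.IsDiag, ω ⟨e, h⟩ = true}).Adj i j ↔
      G.Adj i j ∨ addedP ω s(i, j) := by
    intro i j
    simp only [SimpleGraph.sup_adj, SimpleGraph.fromEdgeSet_adj, Set.mem_setOf_eq]
    constructor
    · rintro (h | ⟨h, -⟩)
      exacts [Or.inl h, Or.inr h]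
    · rintro (h | h)
      · exact Or.inl h
      · refine Or.inr ⟨h, fun hEq => ?_⟩
        obtain ⟨hd, -⟩ := h
        exact hd (by simp [Sym2.mk_isDiag_iff, hEq])
  rw [Nat.card_eq_fintype_card, Fintype.card_subtype]
  set π : V × V × V → Sym2 V := fun t => s(t.1, t.2.1) with hπ
  set SA := (D2 G).filter (fun q => addedP ω q) with hSA
  set SB := (TBf G).filter
    (fun t => addedP ω s(t.1, t.2.1) ∧ addedP ω s(t.1, t.2.2)) with hSB
  set SC := (TCf V).filter
    (fun t => addedP ω s(t.1, t.2.1) ∧ addedP ω s(t.1, t.2.2) ∧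
      addedP ω s(t.2.2, t.2.1)) with hSC
  have hsum1 : ∑ q ∈ D2 G, IndA ω q = (SA.card : ℝ) := by
    rw [hSA]
    unfold IndA
    rw [Finset.sum_boole]
  have hsum2 : ∑ t ∈ TBf G, IndA ω s(t.1, t.2.1) * IndA ω s(t.1, t.2.2)
      = (SB.card : ℝ) := by
    rw [hSB]
    unfold IndA
    simp_rw [ind_mul]
    rw [Finset.sum_boole]
  have hsum3 : ∑ t ∈ TCf V,
      IndA ω s(t.1, t.2.1) * IndA ω s(t.1, t.2.2) * IndA ω s(t.2.2, t.2.1)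
      = (SC.card : ℝ) := by
    rw [hSC]
    unfold IndA
    simp_rw [ind_mul, and_assoc]
    rw [Finset.sum_boole]
  -- the covering
  have hsubset : univ.filter (fun q : Sym2 V => ∃ i j : V, q = s(i, j) ∧ i ≠ j ∧
      ¬ G.Adj i j ∧
      (G ⊔ SimpleGraph.fromEdgeSet
          {e : Sym2 V | ∃ h : ¬ e.IsDiag, ω ⟨e, h⟩ = true}).Adj i j ∧
      ∃ z : V,
        (G ⊔ SimpleGraph.fromEdgeSet
            {e : Sym2 V | ∃ h : ¬ e.IsDiag, ω ⟨e, h⟩ = true}).Adj i z ∧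
        (G ⊔ SimpleGraph.fromEdgeSet
            {e : Sym2 V | ∃ h : ¬ e.IsDiag, ω ⟨e, h⟩ = true}).Adj z j)
      ⊆ (SA ∪ SB.image π) ∪ SC.image π := by
    intro q hq
    simp only [mem_filter, mem_univ, true_and] at hq
    obtain ⟨i, j, hq1, hij, hnadj, hadj, z, hiz, hzj⟩ := hq
    have hadd_ij : addedP ω s(i, j) := by
      rcases (hAdj i j).mp hadj with h | h
      · exact absurd h hnadj
      · exact h
    have hiz_ne : i ≠ z := hiz.ne
    have hzj_ne : z ≠ j := hzj.ne
    rcases (hAdj i z).mp hiz with giz | aiz <;> rcases (hAdj z j).mp hzj with gzj | azj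
    · -- both common-neighbor edges are in G : SA
      refine mem_union_left _ (mem_union_left _ (mem_filter.mpr ⟨?_, ?_⟩))
      · simp only [D2, mem_filter, mem_univ, true_and]
        exact ⟨by rw [hq1]; exact not_isDiag_mk hij, i, j, hq1, hnadj, z, giz, gzj⟩
      · rw [hq1]; exact hadd_ij
    · -- G.Adj i z, added z j : use triple (j, i, z)
      refine mem_union_left _ (mem_union_right _ (Finset.mem_image.mpr
        ⟨(j, i, z), mem_filter.mpr ⟨?_, ?_, ?_⟩, ?_⟩))
      · simp only [TBf, mem_filter, mem_univ, true_and]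
        exact ⟨Ne.symm hij, Ne.symm hzj_ne, hiz_ne,
          fun h => hnadj h.symm, giz.symm⟩
      · show addedP ω s(j, i)
        rw [Sym2.eq_swap]
        exact hadd_ij
      · show addedP ω s(j, z)
        rw [Sym2.eq_swap]
        exact azj
      · show s(j, i) = q
        rw [Sym2.eq_swap, ← hq1]
    · -- added i z, G.Adj z j : use triple (i, j, z)
      refine mem_union_left _ (mem_union_right _ (Finset.mem_image.mpr
        ⟨(i, j, z), mem_filter.mpr ⟨?_, ?_, ?_⟩, hq1.symm⟩))
      · simp only [TBf, mem_filter, mem_univ, true_and]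
        exact ⟨hij, hiz_ne, Ne.symm hzj_ne, hnadj, gzj⟩
      · exact hadd_ij
      · exact aiz
    · -- both added : SC with triple (i, j, z)
      refine mem_union_right _ (Finset.mem_image.mpr
        ⟨(i, j, z), mem_filter.mpr ⟨?_, hadd_ij, aiz, azj⟩, hq1.symm⟩)
      simp only [TCf, mem_filter, mem_univ, true_and]
      exact ⟨hij, hiz_ne, Ne.symm hzj_ne⟩
  -- factor 2 for the cubic term
  have hC2 : 2 * (SC.image π).card ≤ SC.card := by
    refine two_mul_card_image_le SC π (fun t => (t.2.1, t.1, t.2.2)) ?_ ?_ ?_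
    · intro t ht
      rw [hSC] at ht ⊢
      simp only [mem_filter] at ht ⊢
      obtain ⟨htc, a1, a2, a3⟩ := ht
      simp only [TCf, mem_filter, mem_univ, true_and] at htc ⊢
      obtain ⟨h12, h13, h23⟩ := htc
      refine ⟨⟨Ne.symm h12, h23, h13⟩, ?_, ?_, ?_⟩
      · show addedP ω s(t.2.1, t.1)
        rw [Sym2.eq_swap]; exact a1
      · show addedP ω s(t.2.1, t.2.2)
        rw [Sym2.eq_swap]; exact a3
      · show addedP ω s(t.2.2, t.1)
        rw [Sym2.eq_swap]; exact a2
    · intro t ht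
      rw [hSC] at ht
      simp only [mem_filter, TCf, mem_univ, true_and] at ht
      obtain ⟨⟨h12, -, -⟩, -⟩ := ht
      intro h
      rw [Prod.ext_iff] at h
      exact h12 (h.1.symm)
    · intro t
      show s(t.2.1, t.1) = s(t.1, t.2.1)
      rw [Sym2.eq_swap]
  have hchain : (univ.filter (fun q : Sym2 V => ∃ i j : V, q = s(i, j) ∧ i ≠ j ∧
      ¬ G.Adj i j ∧
      (G ⊔ SimpleGraph.fromEdgeSet
          {e : Sym2 V | ∃ h : ¬ e.IsDiag, ω ⟨e, h⟩ = true}).Adj i j ∧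
      ∃ z : V,
        (G ⊔ SimpleGraph.fromEdgeSet
            {e : Sym2 V | ∃ h : ¬ e.IsDiag, ω ⟨e, h⟩ = true}).Adj i z ∧
        (G ⊔ SimpleGraph.fromEdgeSet
            {e : Sym2 V | ∃ h : ¬ e.IsDiag, ω ⟨e, h⟩ = true}).Adj z j)).card
      ≤ SA.card + SB.card + (SC.image π).card := by
    refine (Finset.card_le_card hsubset).trans ?_
    refine (Finset.card_union_le _ _).trans ?_
    have := (Finset.card_union_le SA (SB.image π)).trans
      (Nat.add_le_add_left (Finset.card_image_le (s := SB) (f := π)) SA.card)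
    omega
  rw [hsum1, hsum2, hsum3]
  have h2 : ((SC.image π).card : ℝ) ≤ (SC.card : ℝ) / 2 := by
    have h3 : ((2 * (SC.image π).card : ℕ) : ℝ) ≤ (SC.card : ℝ) := by exact_mod_cast hC2
    push_cast at h3
    linarith
  have h1 := (Nat.cast_le (α := ℝ)).mpr hchain
  push_cast at h1
  linarith

end Key
end Aux



/-- Error-detection theorem. `G` is a simple graph on `n` vertices in which each
vertex has at most `c` vertices within graph distance 2 (walks of length ≤ 2).
Each unordered pair of distinct vertices is added independently with probability
`p ∈ [0,1)`, giving the random supergraph `G' ω = G ⊔ fromEdgeSet {added edges}`.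
`N ω` counts unordered pairs `{i,j}` of distinct vertices not adjacent in `G` that
are adjacent in `G' ω` and have a common neighbor in `G' ω`. Then
`E[N] ≤ c n p + c n² p² + ½ n³ p³`. The probability space is the product Bernoulli
space of the edge indicators `ω : {e : Sym2 V // ¬ e.IsDiag} → Bool`. -/
theorem stmt_0 {V : Type*} [Fintype V] [DecidableEq V]
    (G : SimpleGraph V) (n : ℕ) (hn : Fintype.card V = n)
    (c : ℝ)
    (hc : ∀ v : V, (Nat.card {u : V | ∃ w : G.Walk v u, w.length ≤ 2} : ℝ) ≤ c)
    (p : ℝ) (hp0 : 0 ≤ p) (hp1 : p < 1) :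
    (∑ ω : {e : Sym2 V // ¬ e.IsDiag} → Bool,
        (∏ e : {e : Sym2 V // ¬ e.IsDiag}, if ω e then p else 1 - p) *
          (Nat.card {q : Sym2 V // ∃ i j : V, q = s(i, j) ∧ i ≠ j ∧ ¬ G.Adj i j ∧
            (G ⊔ SimpleGraph.fromEdgeSet
                {e : Sym2 V | ∃ h : ¬ e.IsDiag, ω ⟨e, h⟩ = true}).Adj i j ∧
            ∃ z : V,
              (G ⊔ SimpleGraph.fromEdgeSet
                  {e : Sym2 V | ∃ h : ¬ e.IsDiag, ω ⟨e, h⟩ = true}).Adj i z ∧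
              (G ⊔ SimpleGraph.fromEdgeSet
                  {e : Sym2 V | ∃ h : ¬ e.IsDiag, ω ⟨e, h⟩ = true}).Adj z j} : ℝ))
      ≤ c * n * p + c * n ^ 2 * p ^ 2 + (1 / 2) * n ^ 3 * p ^ 3 := by
  classical
  have hW : ∀ ω : {e : Sym2 V // ¬ e.IsDiag} → Bool,
      (0:ℝ) ≤ ∏ e : {e : Sym2 V // ¬ e.IsDiag}, if ω e then p else 1 - p := by
    intro ω
    refine Finset.prod_nonneg fun e _ => ?_
    by_cases h : ω e
    · simpa [h] using hp0
    · rw [if_neg h]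
      linarith
  have step1 : (∑ ω : {e : Sym2 V // ¬ e.IsDiag} → Bool,
        (∏ e : {e : Sym2 V // ¬ e.IsDiag}, if ω e then p else 1 - p) *
          (Nat.card {q : Sym2 V // ∃ i j : V, q = s(i, j) ∧ i ≠ j ∧ ¬ G.Adj i j ∧
            (G ⊔ SimpleGraph.fromEdgeSet
                {e : Sym2 V | ∃ h : ¬ e.IsDiag, ω ⟨e, h⟩ = true}).Adj i j ∧
            ∃ z : V,
              (G ⊔ SimpleGraph.fromEdgeSet
                  {e : Sym2 V | ∃ h : ¬ e.IsDiag, ω ⟨e, h⟩ = true}).Adj i z ∧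
              (G ⊔ SimpleGraph.fromEdgeSet
                  {e : Sym2 V | ∃ h : ¬ e.IsDiag, ω ⟨e, h⟩ = true}).Adj z j} : ℝ))
      ≤ ∑ ω : {e : Sym2 V // ¬ e.IsDiag} → Bool,
        (∏ e : {e : Sym2 V // ¬ e.IsDiag}, if ω e then p else 1 - p) *
          ((∑ q ∈ D2 G, IndA ω q)
            + (∑ t ∈ TBf G, IndA ω s(t.1, t.2.1) * IndA ω s(t.1, t.2.2))
            + (1 / 2) * ∑ t ∈ TCf V,
                IndA ω s(t.1, t.2.1) * IndA ω s(t.1, t.2.2) * IndA ω s(t.2.2, t.2.1)) :=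
    Finset.sum_le_sum fun ω _ => mul_le_mul_of_nonneg_left (key_bound G ω) (hW ω)
  refine le_trans step1 ?_
  have e1 : ∑ ω : {e : Sym2 V // ¬ e.IsDiag} → Bool,
      (∏ e : {e : Sym2 V // ¬ e.IsDiag}, if ω e then p else 1 - p) *
        (∑ q ∈ D2 G, IndA ω q) = ((D2 G).card : ℝ) * p := by
    calc ∑ ω : {e : Sym2 V // ¬ e.IsDiag} → Bool,
        (∏ e : {e : Sym2 V // ¬ e.IsDiag}, if ω e then p else 1 - p) *
          (∑ q ∈ D2 G, IndA ω q)
        = ∑ ω : {e : Sym2 V // ¬ e.IsDiag} → Bool, ∑ q ∈ D2 G,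
            (∏ e : {e : Sym2 V // ¬ e.IsDiag}, if ω e then p else 1 - p) * IndA ω q := by
          simp_rw [Finset.mul_sum]
      _ = ∑ q ∈ D2 G, ∑ ω : {e : Sym2 V // ¬ e.IsDiag} → Bool,
            (∏ e : {e : Sym2 V // ¬ e.IsDiag}, if ω e then p else 1 - p) * IndA ω q :=
          Finset.sum_comm
      _ = ∑ _q ∈ D2 G, p := Finset.sum_congr rfl fun q hq => exp_one G p hq
      _ = ((D2 G).card : ℝ) * p := by rw [Finset.sum_const, nsmul_eq_mul]
  have e2 : ∑ ω : {e : Sym2 V // ¬ e.IsDiag} → Bool,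
      (∏ e : {e : Sym2 V // ¬ e.IsDiag}, if ω e then p else 1 - p) *
        (∑ t ∈ TBf G, IndA ω s(t.1, t.2.1) * IndA ω s(t.1, t.2.2))
      = ((TBf G).card : ℝ) * p ^ 2 := by
    calc ∑ ω : {e : Sym2 V // ¬ e.IsDiag} → Bool,
        (∏ e : {e : Sym2 V // ¬ e.IsDiag}, if ω e then p else 1 - p) *
          (∑ t ∈ TBf G, IndA ω s(t.1, t.2.1) * IndA ω s(t.1, t.2.2))
        = ∑ ω : {e : Sym2 V // ¬ e.IsDiag} → Bool, ∑ t ∈ TBf G,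
            (∏ e : {e : Sym2 V // ¬ e.IsDiag}, if ω e then p else 1 - p) *
              (IndA ω s(t.1, t.2.1) * IndA ω s(t.1, t.2.2)) := by
          simp_rw [Finset.mul_sum]
      _ = ∑ t ∈ TBf G, ∑ ω : {e : Sym2 V // ¬ e.IsDiag} → Bool,
            (∏ e : {e : Sym2 V // ¬ e.IsDiag}, if ω e then p else 1 - p) *
              (IndA ω s(t.1, t.2.1) * IndA ω s(t.1, t.2.2)) := Finset.sum_comm
      _ = ∑ _t ∈ TBf G, p ^ 2 := Finset.sum_congr rfl fun t ht => exp_two G p ht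
      _ = ((TBf G).card : ℝ) * p ^ 2 := by rw [Finset.sum_const, nsmul_eq_mul]
  have e3 : ∑ ω : {e : Sym2 V // ¬ e.IsDiag} → Bool,
      (∏ e : {e : Sym2 V // ¬ e.IsDiag}, if ω e then p else 1 - p) *
        ((1 / 2) * ∑ t ∈ TCf V,
          IndA ω s(t.1, t.2.1) * IndA ω s(t.1, t.2.2) * IndA ω s(t.2.2, t.2.1))
      = (1 / 2) * (((TCf V).card : ℝ) * p ^ 3) := by
    simp_rw [mul_left_comm _ ((1:ℝ)/2)]
    rw [← Finset.mul_sum]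
    congr 1
    calc ∑ ω : {e : Sym2 V // ¬ e.IsDiag} → Bool,
        (∏ e : {e : Sym2 V // ¬ e.IsDiag}, if ω e then p else 1 - p) *
          (∑ t ∈ TCf V, IndA ω s(t.1, t.2.1) * IndA ω s(t.1, t.2.2) * IndA ω s(t.2.2, t.2.1))
        = ∑ ω : {e : Sym2 V // ¬ e.IsDiag} → Bool, ∑ t ∈ TCf V,
            (∏ e : {e : Sym2 V // ¬ e.IsDiag}, if ω e then p else 1 - p) *
              (IndA ω s(t.1, t.2.1) * IndA ω s(t.1, t.2.2) * IndA ω s(t.2.2, t.2.1)) := by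
          simp_rw [Finset.mul_sum]
      _ = ∑ t ∈ TCf V, ∑ ω : {e : Sym2 V // ¬ e.IsDiag} → Bool,
            (∏ e : {e : Sym2 V // ¬ e.IsDiag}, if ω e then p else 1 - p) *
              (IndA ω s(t.1, t.2.1) * IndA ω s(t.1, t.2.2) * IndA ω s(t.2.2, t.2.1)) :=
          Finset.sum_comm
      _ = ∑ _t ∈ TCf V, p ^ 3 := Finset.sum_congr rfl fun t ht => exp_three p ht
      _ = ((TCf V).card : ℝ) * p ^ 3 := by rw [Finset.sum_const, nsmul_eq_mul]
  calc ∑ ω : {e : Sym2 V // ¬ e.IsDiag} → Bool,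
      (∏ e : {e : Sym2 V // ¬ e.IsDiag}, if ω e then p else 1 - p) *
        ((∑ q ∈ D2 G, IndA ω q)
          + (∑ t ∈ TBf G, IndA ω s(t.1, t.2.1) * IndA ω s(t.1, t.2.2))
          + (1 / 2) * ∑ t ∈ TCf V,
              IndA ω s(t.1, t.2.1) * IndA ω s(t.1, t.2.2) * IndA ω s(t.2.2, t.2.1))
      = ((D2 G).card : ℝ) * p + ((TBf G).card : ℝ) * p ^ 2
          + (1 / 2) * (((TCf V).card : ℝ) * p ^ 3) := by
        simp_rw [mul_add]
        rw [Finset.sum_add_distrib, Finset.sum_add_distrib, e1, e2, e3]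
    _ ≤ c * n * p + c * n ^ 2 * p ^ 2 + (1 / 2) * n ^ 3 * p ^ 3 := by
        have hD2 := cardD2_le G n hn c hc
        have hTB := cardTB_le G n hn c hc
        have hTC := cardTC_le (V := V) n hn
        have b1 : ((D2 G).card : ℝ) * p ≤ c * n * p :=
          mul_le_mul_of_nonneg_right hD2 hp0
        have b2 : ((TBf G).card : ℝ) * p ^ 2 ≤ c * n ^ 2 * p ^ 2 :=
          mul_le_mul_of_nonneg_right hTB (pow_nonneg hp0 2)
        have b3 : ((TCf V).card : ℝ) * p ^ 3 ≤ (n : ℝ) ^ 3 * p ^ 3 :=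
          mul_le_mul_of_nonneg_right hTC (pow_nonneg hp0 3)
        linarith
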